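/- Let f₀ : ℝⁿ → ℝ be differentiable with L-Lipschitz gradient on a convex set C, let f₁ be proper convex lsc with dom(f₁) ⊆ C, x^(k) ∈ dom(f₁), ỹ ∈ dom(f₁), d = ỹ − x^(k), and h_γ(ỹ) ≤ 0 where h_γ(x) = ⟨∇f₀(x^(k)), x−x^(k)⟩ + (γ/(2α))‖x−x^(k)‖²_D + f₁(x) − f₁(x^(k)). Suppose moreover that c‖ỹ − x^(k)‖² ≤ −h_γ(ỹ) for some c > 0, with f = f₀ + f₁. Then for every λ ∈ [0,1]: f(x^(k) + λd) ≤ f(x^(k)) + λ(1 − (L/(2c))λ) h_γ(ỹ). -/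

import Mathlib

open Matrix

/-- The Euclidean norm on `ℝⁿ`. -/
noncomputable def enorm {n : ℕ} (x : Fin n → ℝ) : ℝ := Real.sqrt (∑ i, x i ^ 2)

lemma enorm_nonneg {n : ℕ} (x : Fin n → ℝ) : 0 ≤ _root_.enorm x := Real.sqrt_nonneg _

lemma enorm_smul' {n : ℕ} (t : ℝ) (x : Fin n → ℝ) : _root_.enorm (t • x) = |t| * _root_.enorm x := by
  unfold _root_.enorm
  rw [← Real.sqrt_sq_eq_abs, ← Real.sqrt_mul (sq_nonneg t), Finset.mul_sum]
  exact congrArg Real.sqrt (Finset.sum_congr rfl fun i _ => by simp [mul_pow])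

lemma dot_le_enorm {n : ℕ} (u v : Fin n → ℝ) : u ⬝ᵥ v ≤ _root_.enorm u * _root_.enorm v := by
  simpa [dotProduct, _root_.enorm] using Real.sum_mul_le_sqrt_mul_sqrt Finset.univ u v

lemma sq_enorm {n : ℕ} (x : Fin n → ℝ) : _root_.enorm x ^ 2 = ∑ i, x i ^ 2 := by
  unfold _root_.enorm; rw [Real.sq_sqrt]; positivity

lemma descent {n : ℕ} (C : Set (Fin n → ℝ)) (hC : Convex ℝ C)
    (f₀ : (Fin n → ℝ) → ℝ) (f' : (Fin n → ℝ) → ((Fin n → ℝ) →L[ℝ] ℝ))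
    (g : (Fin n → ℝ) → (Fin n → ℝ))
    (hdiff : ∀ x ∈ C, HasFDerivAt f₀ (f' x) x)
    (hgradrep : ∀ x ∈ C, ∀ u : Fin n → ℝ, f' x u = g x ⬝ᵥ u)
    (L : ℝ) (hL : 0 ≤ L)
    (hlip : ∀ x ∈ C, ∀ y ∈ C, _root_.enorm (g x - g y) ≤ L * _root_.enorm (x - y))
    (x y : Fin n → ℝ) (hx : x ∈ C) (hy : y ∈ C)
    (lam : ℝ) (h0 : 0 ≤ lam) (h1 : lam ≤ 1) :
    f₀ (x + lam • (y - x)) ≤ f₀ x + lam * (g x ⬝ᵥ (y - x))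
      + L / 2 * lam ^ 2 * _root_.enorm (y - x) ^ 2 := by
  set d := y - x with hd
  have hmem : ∀ t ∈ Set.Icc (0:ℝ) 1, x + t • d ∈ C := by
    intro t ht
    have := hC hx hy (by linarith [ht.2] : (0:ℝ) ≤ 1 - t) ht.1 (by ring)
    convert this using 1
    simp only [hd, smul_sub]
    module
  set ψ : ℝ → ℝ := fun t => g (x + t • d) ⬝ᵥ d with hψ
  have hderiv : ∀ t ∈ Set.Icc (0:ℝ) 1,
      HasDerivAt (fun t : ℝ => f₀ (x + t • d)) (ψ t) t := by
    intro t ht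
    have hline : HasDerivAt (fun t : ℝ => x + t • d) d t := by
      simpa using ((hasDerivAt_id t).smul_const d).const_add x
    have := (hdiff _ (hmem t ht)).comp_hasDerivAt t hline
    simpa [hψ, hgradrep _ (hmem t ht), Function.comp_def] using this
  have hψdiff : ∀ s ∈ Set.Icc (0:ℝ) 1, ∀ t ∈ Set.Icc (0:ℝ) 1,
      ψ t - ψ s ≤ L * |t - s| * _root_.enorm d ^ 2 := by
    intro s hs t ht
    have h1' : ψ t - ψ s = (g (x + t • d) - g (x + s • d)) ⬝ᵥ d := by
      simp [hψ, sub_dotProduct]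
    rw [h1']
    calc (g (x + t • d) - g (x + s • d)) ⬝ᵥ d
        ≤ _root_.enorm (g (x + t • d) - g (x + s • d)) * _root_.enorm d := dot_le_enorm _ _
      _ ≤ (L * _root_.enorm ((x + t • d) - (x + s • d))) * _root_.enorm d := by
          exact mul_le_mul_of_nonneg_right
            (hlip _ (hmem t ht) _ (hmem s hs)) (enorm_nonneg d)
      _ = L * |t - s| * _root_.enorm d ^ 2 := by
          have : (x + t • d) - (x + s • d) = (t - s) • d := by module
          rw [this, enorm_smul']; ring
  have hψcont : ContinuousOn ψ (Set.Icc (0:ℝ) 1) := by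
    have : LipschitzOnWith (Real.toNNReal (L * _root_.enorm d ^ 2)) ψ (Set.Icc (0:ℝ) 1) := by
      apply LipschitzOnWith.of_dist_le_mul
      intro t ht s hs
      rw [Real.dist_eq, Real.dist_eq]
      rw [abs_le]
      constructor
      · have := hψdiff t ht s hs
        have h2 : |s - t| = |t - s| := abs_sub_comm s t
        rw [h2] at this
        have h3 : Real.toNNReal (L * _root_.enorm d ^ 2) * |t - s| = L * _root_.enorm d ^2 * |t-s| := by
          rw [Real.coe_toNNReal]; positivity
        nlinarith
      · have := hψdiff s hs t ht
        have h3 : Real.toNNReal (L * _root_.enorm d ^ 2) * |t - s| = L * _root_.enorm d ^2 * |t-s| := by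
          rw [Real.coe_toNNReal]; positivity
        nlinarith
    exact this.continuousOn
  have hsub : Set.uIcc (0:ℝ) lam ⊆ Set.Icc 0 1 := by
    rw [Set.uIcc_of_le h0]
    exact Set.Icc_subset_Icc le_rfl h1
  have hint : IntervalIntegrable ψ MeasureTheory.volume 0 lam :=
    (hψcont.mono hsub).intervalIntegrable
  have hftc : ∫ t in (0:ℝ)..lam, ψ t = f₀ (x + lam • d) - f₀ (x + (0:ℝ) • d) := by
    apply intervalIntegral.integral_eq_sub_of_hasDerivAt
    · intro t ht; exact hderiv t (hsub ht)
    · exact hint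
  have hintbd : ∫ t in (0:ℝ)..lam, ψ t ≤
      ∫ t in (0:ℝ)..lam, (ψ 0 + (L * _root_.enorm d ^ 2) * t) := by
    apply intervalIntegral.integral_mono_on h0 hint
    · exact (intervalIntegrable_const).add
        ((intervalIntegral.intervalIntegrable_id).const_mul _)
    · intro t ht
      have ht1 : t ∈ Set.Icc (0:ℝ) 1 := ⟨ht.1, le_trans ht.2 h1⟩
      have := hψdiff 0 (by constructor <;> norm_num) t ht1
      have habs : |t - 0| = t := by rw [sub_zero, abs_of_nonneg ht.1]
      rw [habs] at this
      nlinarith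
  have hrhs : ∫ t in (0:ℝ)..lam, (ψ 0 + (L * _root_.enorm d ^ 2) * t)
      = lam * ψ 0 + L / 2 * lam ^ 2 * _root_.enorm d ^ 2 := by
    rw [intervalIntegral.integral_add intervalIntegrable_const
      ((intervalIntegral.intervalIntegrable_id).const_mul _),
      intervalIntegral.integral_const, intervalIntegral.integral_const_mul,
      integral_id]
    simp; ring
  have hψ0 : ψ 0 = g x ⬝ᵥ d := by simp [hψ]
  have h00 : x + (0:ℝ) • d = x := by simp
  rw [h00] at hftc
  rw [hrhs, hψ0] at hintbd
  linarith [hftc ▸ hintbd]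

/-- Convexity of an extended-real-valued function. -/
def ERealConvex {n : ℕ} (Ψ : (Fin n → ℝ) → EReal) : Prop :=
  ∀ x y : Fin n → ℝ, ∀ t : ℝ, 0 ≤ t → t ≤ 1 →
    Ψ (t • x + (1 - t) • y) ≤ ((t : ℝ) : EReal) * Ψ x + ((1 - t : ℝ) : EReal) * Ψ y

theorem stmt10 {n : ℕ} (C : Set (Fin n → ℝ)) (hC : Convex ℝ C)
    (f₀ : (Fin n → ℝ) → ℝ) (f' : (Fin n → ℝ) → ((Fin n → ℝ) →L[ℝ] ℝ))
    (g : (Fin n → ℝ) → (Fin n → ℝ))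
    (hdiff : ∀ x ∈ C, HasFDerivAt f₀ (f' x) x)
    (hgradrep : ∀ x ∈ C, ∀ u : Fin n → ℝ, f' x u = g x ⬝ᵥ u)
    (L : ℝ) (hL : 0 < L)
    (hlip : ∀ x ∈ C, ∀ y ∈ C, _root_.enorm (g x - g y) ≤ L * _root_.enorm (x - y))
    (f₁ : (Fin n → ℝ) → EReal)
    (hbot : ∀ x, f₁ x ≠ ⊥) (hproper : ∃ x, f₁ x ≠ ⊤)
    (hconv : ERealConvex f₁) (hlsc : LowerSemicontinuous f₁)
    (hdomC : ∀ x : Fin n → ℝ, f₁ x ≠ ⊤ → x ∈ C)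
    (α γ : ℝ) (hα : 0 < α) (hγ01 : γ ∈ Set.Icc (0 : ℝ) 1)
    (D : Matrix (Fin n) (Fin n) ℝ) (hsymm : D.IsSymm) (hpd : D.PosDef)
    (xk ytil : Fin n → ℝ) (hxk : f₁ xk ≠ ⊤) (hytil : f₁ ytil ≠ ⊤)
    (hgam : (Fin n → ℝ) → EReal)
    (hgamdef : ∀ x : Fin n → ℝ, hgam x =
      ((g xk ⬝ᵥ (x - xk) + γ / (2 * α) * ((x - xk) ⬝ᵥ D.mulVec (x - xk)) : ℝ) : EReal)
        + f₁ x - f₁ xk)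
    (hneg : hgam ytil ≤ 0)
    (c : ℝ) (hc : 0 < c)
    (hcoer : ((c * _root_.enorm (ytil - xk) ^ 2 : ℝ) : EReal) ≤ -hgam ytil) :
    ∀ lam : ℝ, lam ∈ Set.Icc (0 : ℝ) 1 →
      ((f₀ (xk + lam • (ytil - xk)) : ℝ) : EReal) + f₁ (xk + lam • (ytil - xk)) ≤
        ((f₀ xk : ℝ) : EReal) + f₁ xk
          + ((lam * (1 - L / (2 * c) * lam) : ℝ) : EReal) * hgam ytil := by
  intro lam hlam
  obtain ⟨h0, h1⟩ := hlam
  set d := ytil - xk with hd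
  have hxC : xk ∈ C := hdomC xk hxk
  have hyC : ytil ∈ C := hdomC ytil hytil
  -- real values of f₁
  set a : ℝ := (f₁ ytil).toReal with ha'
  set b : ℝ := (f₁ xk).toReal with hb'
  have ha : ((a : ℝ) : EReal) = f₁ ytil := EReal.coe_toReal hytil (hbot ytil)
  have hb : ((b : ℝ) : EReal) = f₁ xk := EReal.coe_toReal hxk (hbot xk)
  set G : ℝ := g xk ⬝ᵥ d with hG
  set q : ℝ := γ / (2 * α) * (d ⬝ᵥ D.mulVec d) with hq
  set N : ℝ := _root_.enorm d with hN
  set r : ℝ := G + q + a - b with hrdef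
  have hr : hgam ytil = ((r : ℝ) : EReal) := by
    rw [hgamdef ytil, ← ha, ← hb, ← EReal.coe_add, ← EReal.coe_sub]
  have hrle : r ≤ 0 := by
    rw [hr] at hneg
    exact_mod_cast hneg
  have hcoer' : c * N ^ 2 ≤ -r := by
    rw [hr] at hcoer
    rw [← EReal.coe_neg] at hcoer
    exact_mod_cast hcoer
  have hqnn : 0 ≤ q := by
    have h1' : 0 ≤ d ⬝ᵥ D.mulVec d := by
      have := hpd.posSemidef.dotProduct_mulVec_nonneg d
      simpa using this
    have h2' : 0 ≤ γ / (2 * α) := div_nonneg hγ01.1 (by linarith)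
    exact mul_nonneg h2' h1'
  have hNnn : 0 ≤ N := enorm_nonneg d
  -- descent lemma
  have hdesc : f₀ (xk + lam • d) ≤ f₀ xk + lam * G + L / 2 * lam ^ 2 * N ^ 2 :=
    descent C hC f₀ f' g hdiff hgradrep L hL.le hlip xk ytil hxC hyC lam h0 h1
  -- convexity of f₁
  have hpt : lam • ytil + (1 - lam) • xk = xk + lam • d := by
    rw [hd]; module
  have hconv' : f₁ (xk + lam • d) ≤ ((lam * a + (1 - lam) * b : ℝ) : EReal) := by
    have := hconv ytil xk lam h0 h1
    rw [hpt, ← ha, ← hb] at this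
    rw [EReal.coe_add, EReal.coe_mul, EReal.coe_mul]
    exact this
  -- real-number core inequality
  have hNsq : N ^ 2 ≤ -r / c := by
    rw [le_div_iff₀ hc]; linarith [hcoer']
  have hkey : f₀ (xk + lam • d) + (lam * a + (1 - lam) * b)
      ≤ f₀ xk + b + lam * (1 - L / (2 * c) * lam) * r := by
    have h5 : L / 2 * lam ^ 2 * N ^ 2 ≤ L / 2 * lam ^ 2 * (-r / c) := by
      apply mul_le_mul_of_nonneg_left hNsq
      positivity
    have h6 : L / 2 * lam ^ 2 * (-r / c) = -(L / (2 * c)) * lam ^ 2 * r := by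
      field_simp
    have h7 : lam * (G + a - b) ≤ lam * r := by
      apply mul_le_mul_of_nonneg_left _ h0
      linarith [hqnn]
    nlinarith [hdesc, h5, h6, h7]
  -- assemble in EReal
  calc ((f₀ (xk + lam • d) : ℝ) : EReal) + f₁ (xk + lam • d)
      ≤ ((f₀ (xk + lam • d) : ℝ) : EReal) + ((lam * a + (1 - lam) * b : ℝ) : EReal) :=
        add_le_add le_rfl hconv'
    _ = ((f₀ (xk + lam • d) + (lam * a + (1 - lam) * b) : ℝ) : EReal) := by
        rw [← EReal.coe_add]
    _ ≤ ((f₀ xk + b + lam * (1 - L / (2 * c) * lam) * r : ℝ) : EReal) :=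
        EReal.coe_le_coe_iff.2 hkey
    _ = ((f₀ xk : ℝ) : EReal) + f₁ xk
          + ((lam * (1 - L / (2 * c) * lam) : ℝ) : EReal) * hgam ytil := by
        rw [hr, ← hb, ← EReal.coe_mul, ← EReal.coe_add, ← EReal.coe_add]
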